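/- Every outcome W produced by an execution of Rule X is in the α-core for α = 4·ln(2·u_max/u_min), where u_max = max_{i∈N} max_{W' feasible} u_i(W') and u_min = min_{i∈N} min_{W' ⊆ C : u_i(W') > 0} u_i(W'): for every S ⊆ N and T ⊆ C with cost(T) ≤ |S|/n there exist i ∈ S and c ∈ T such that u_i(W ∪ {c}) ≥ u_i(T)/α. -/

import Mathlib

open Finset

section PBDefs

variable {V C : Type*} [Fintype V] [DecidableEq V] [Fintype C] [DecidableEq C]

/-- Total cost (as a real number) of a set of candidates. -/
def costOf (cost : C → ℚ) (T : Finset C) : ℝ := ∑ c ∈ T, (cost c : ℝ)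

/-- Total (additive) utility of voter `i` for a set of candidates. -/
def util (u : V → C → ℝ) (i : V) (T : Finset C) : ℝ := ∑ c ∈ T, u i c

/-- A set of candidates is feasible if its total cost is within the budget of 1. -/
def feasible (cost : C → ℚ) (W : Finset C) : Prop := costOf cost W ≤ 1

/-- The validity conditions of a PB election: positive costs, utilities in `[0,1]`,
and every candidate is assigned positive utility by some voter. -/
def validPB (cost : C → ℚ) (u : V → C → ℝ) : Prop :=
  (∀ c, 0 < cost c) ∧ (∀ i c, 0 ≤ u i c ∧ u i c ≤ 1) ∧ (∀ c, ∃ i, 0 < u i c)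

/-- Extended justified representation, up to one project: for every (α,T)-cohesive
(nonempty) group `S` of voters, some voter `i ∈ S` gets utility at least `∑ c ∈ T, α c`,
or some voter `i ∈ S` would exceed this utility after adding one more candidate. -/
def EJRupToOne (cost : C → ℚ) (u : V → C → ℝ) (W : Finset C) : Prop :=
  ∀ (α : C → ℝ) (S : Finset V) (T : Finset C),
    (∀ c, 0 ≤ α c ∧ α c ≤ 1) →
    S.Nonempty →
    costOf cost T * (Fintype.card V : ℝ) ≤ (S.card : ℝ) →
    (∀ i ∈ S, ∀ c ∈ T, α c ≤ u i c) →
    (∃ i ∈ S, (∑ c ∈ T, α c) ≤ util u i W) ∨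
      (∃ i ∈ S, ∃ a : C, (∑ c ∈ T, α c) < util u i (insert a W))

/-- Extended justified representation (exact version): for every (α,T)-cohesive
(nonempty) group `S` of voters, some voter `i ∈ S` gets utility at least `∑ c ∈ T, α c`. -/
def EJRexact (cost : C → ℚ) (u : V → C → ℝ) (W : Finset C) : Prop :=
  ∀ (α : C → ℝ) (S : Finset V) (T : Finset C),
    (∀ c, 0 ≤ α c ∧ α c ≤ 1) →
    S.Nonempty →
    costOf cost T * (Fintype.card V : ℝ) ≤ (S.card : ℝ) →
    (∀ i ∈ S, ∀ c ∈ T, α c ≤ u i c) →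
    ∃ i ∈ S, (∑ c ∈ T, α c) ≤ util u i W

/-- A (nonempty) group `S` of voters is weakly (β,T)-cohesive. -/
def weaklyCohesive (cost : C → ℚ) (u : V → C → ℝ) (β : ℝ) (S : Finset V) (T : Finset C) :
    Prop :=
  S.Nonempty ∧ costOf cost T * (Fintype.card V : ℝ) ≤ (S.card : ℝ) ∧
    ∀ i ∈ S, β ≤ util u i T

/-- Full justified representation. -/
def FJR (cost : C → ℚ) (u : V → C → ℝ) (W : Finset C) : Prop :=
  ∀ (β : ℝ) (S : Finset V) (T : Finset C),
    weaklyCohesive cost u β S T → ∃ i ∈ S, β ≤ util u i W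

/-- An outcome is exhaustive if no further candidate fits within the budget. -/
def exhaustive (cost : C → ℚ) (W : Finset C) : Prop :=
  ∀ c ∉ W, 1 < costOf cost (insert c W)

/-- The core: no nonempty group `S` of voters together with a set `T` of candidates
affordable with `S`'s share of the budget can block the outcome. -/
def inCore (cost : C → ℚ) (u : V → C → ℝ) (W : Finset C) : Prop :=
  ∀ (S : Finset V) (T : Finset C), S.Nonempty →
    costOf cost T * (Fintype.card V : ℝ) ≤ (S.card : ℝ) →
    ∃ i ∈ S, util u i T ≤ util u i W

/-- The multiplicative `a`-approximate core. -/
def inAlphaCore (cost : C → ℚ) (u : V → C → ℝ) (a : ℝ) (W : Finset C) : Prop :=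
  ∀ (S : Finset V) (T : Finset C), T.Nonempty →
    costOf cost T ≤ (S.card : ℝ) / (Fintype.card V : ℝ) →
    ∃ i ∈ S, ∃ c ∈ T, util u i T / a ≤ util u i (insert c W)

/-- The total amount paid so far by voter `i`, given per-candidate payments. -/
def totalPaid (pay : V → C → ℝ) (i : V) : ℝ := ∑ c, pay i c

/-- A candidate `c` is ρ-affordable given the payments made so far. -/
def affordable (cost : C → ℚ) (u : V → C → ℝ) (pay : V → C → ℝ) (ρ : ℝ) (c : C) : Prop :=
  ∑ i, min (1 / (Fintype.card V : ℝ) - totalPaid pay i) (u i c * ρ) = (cost c : ℝ)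

/-- One step of Rule X: add a candidate that is ρ-affordable for the minimum ρ ≥ 0,
and record the corresponding payments. -/
def RuleXStep (cost : C → ℚ) (u : V → C → ℝ) :
    (Finset C × (V → C → ℝ)) → (Finset C × (V → C → ℝ)) → Prop := fun s t =>
  ∃ c ∉ s.1, ∃ ρ : ℝ, 0 ≤ ρ ∧ affordable cost u s.2 ρ c ∧
    (∀ ρ' : ℝ, 0 ≤ ρ' → ∀ c' ∉ s.1, affordable cost u s.2 ρ' c' → ρ ≤ ρ') ∧
    t = (insert c s.1,
      fun i c' => if c' = c then
        min (1 / (Fintype.card V : ℝ) - totalPaid s.2 i) (u i c * ρ) else s.2 i c')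

/-- Rule X terminates when no remaining candidate is ρ-affordable for any ρ ≥ 0. -/
def RuleXTerminal (cost : C → ℚ) (u : V → C → ℝ) (s : Finset C × (V → C → ℝ)) : Prop :=
  ∀ ρ : ℝ, 0 ≤ ρ → ∀ c ∉ s.1, ¬ affordable cost u s.2 ρ c

/-- `W` is the output of some execution of Rule X. -/
def RuleXOutcome (cost : C → ℚ) (u : V → C → ℝ) (W : Finset C) : Prop :=
  ∃ pay : V → C → ℝ,
    Relation.ReflTransGen (RuleXStep cost u) (∅, fun _ _ => 0) (W, pay) ∧
      RuleXTerminal cost u (W, pay)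

/-- One step of the Greedy Cohesive Rule: a state consists of the current outcome,
the active voters and the active candidates.  The rule picks a weakly (β,T)-cohesive
group of active voters with β maximal, breaking ties in favor of smaller `cost T`. -/
def GCRStep (cost : C → ℚ) (u : V → C → ℝ) :
    (Finset C × Finset V × Finset C) → (Finset C × Finset V × Finset C) → Prop := fun s t =>
  ∃ (β : ℝ) (S : Finset V) (T : Finset C),
    0 < β ∧ S ⊆ s.2.1 ∧ T ⊆ s.2.2 ∧ weaklyCohesive cost u β S T ∧
    (∀ (β' : ℝ) (S' : Finset V) (T' : Finset C), 0 < β' → S' ⊆ s.2.1 → T' ⊆ s.2.2 →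
      weaklyCohesive cost u β' S' T' → β' ≤ β) ∧
    (∀ (S' : Finset V) (T' : Finset C), S' ⊆ s.2.1 → T' ⊆ s.2.2 →
      weaklyCohesive cost u β S' T' → costOf cost T ≤ costOf cost T') ∧
    t = (s.1 ∪ T, s.2.1 \ S, s.2.2 \ T)

/-- GCR terminates when no weakly cohesive group of active voters remains. -/
def GCRTerminal (cost : C → ℚ) (u : V → C → ℝ) (s : Finset C × Finset V × Finset C) : Prop :=
  ∀ (β : ℝ) (S : Finset V) (T : Finset C), 0 < β → S ⊆ s.2.1 → T ⊆ s.2.2 →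
    ¬ weaklyCohesive cost u β S T

/-- `W` is the output of some execution of the Greedy Cohesive Rule. -/
def GCROutcome (cost : C → ℚ) (u : V → C → ℝ) (W : Finset C) : Prop :=
  ∃ (AV : Finset V) (AC : Finset C),
    Relation.ReflTransGen (GCRStep cost u) (∅, Finset.univ, Finset.univ) (W, AV, AC) ∧
      GCRTerminal cost u (W, AV, AC)

/-- A price system `(b, p)` (with nonnegative payments) supports the outcome `W`:
conditions (C1)-(C5). -/
def supports (cost : C → ℚ) (u : V → C → ℝ) (b : ℝ) (p : V → C → ℝ) (W : Finset C) : Prop :=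
  1 ≤ b ∧ (∀ i c, 0 ≤ p i c) ∧
  (∀ i c, u i c = 0 → p i c = 0) ∧
  (∀ i, ∑ c, p i c ≤ b / (Fintype.card V : ℝ)) ∧
  (∀ c ∈ W, ∑ i, p i c = (cost c : ℝ)) ∧
  (∀ c ∉ W, ∑ i, p i c = 0) ∧
  (∀ c ∉ W, ∑ i ∈ Finset.univ.filter (fun i => 0 < u i c),
    (b / (Fintype.card V : ℝ) - ∑ c' ∈ W, p i c') ≤ (cost c : ℝ))

/-- An outcome is priceable if some price system supports it. -/
def priceable (cost : C → ℚ) (u : V → C → ℝ) (W : Finset C) : Prop :=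
  ∃ (b : ℝ) (p : V → C → ℝ), supports cost u b p W

/-- EJR for approval-based elections: every `T`-cohesive group contains a voter
with at least `|T|` approved candidates in `W`. -/
def approvalEJR (cost : C → ℚ) (A : V → Finset C) (W : Finset C) : Prop :=
  ∀ (S : Finset V) (T : Finset C), S.Nonempty →
    costOf cost T * (Fintype.card V : ℝ) ≤ (S.card : ℝ) →
    (∀ i ∈ S, T ⊆ A i) →
    ∃ i ∈ S, T.card ≤ (A i ∩ W).card

/-- The `t`-th harmonic number. -/
noncomputable def harm (t : ℕ) : ℝ := ∑ j ∈ Finset.range t, (1 : ℝ) / (j + 1)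

/-- The PAV score of an outcome. -/
noncomputable def PAVscore (A : V → Finset C) (W : Finset C) : ℝ := ∑ i, harm ((A i ∩ W).card)

end PBDefs

set_option linter.unusedSectionVars false

section RuleXProof

variable {V C : Type*} [Fintype V] [DecidableEq V] [Fintype C] [DecidableEq C]

lemma util_nonneg (u : V → C → ℝ) (hu : ∀ i c, 0 ≤ u i c) (i : V) (T : Finset C) :
    0 ≤ util u i T := Finset.sum_nonneg fun c _ => hu i c

lemma util_mono (u : V → C → ℝ) (hu : ∀ i c, 0 ≤ u i c) (i : V) {T T' : Finset C}
    (h : T ⊆ T') : util u i T ≤ util u i T' :=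
  Finset.sum_le_sum_of_subset_of_nonneg h fun c _ _ => hu i c

/-- Invariant maintained along a Rule X execution whose steps so far all had rate `≤ ρstar`. -/
def InvP (u : V → C → ℝ) (ρstar : ℝ) (st : Finset C × (V → C → ℝ)) : Prop :=
  (∀ i c, 0 ≤ st.2 i c) ∧ (∀ i c, c ∉ st.1 → st.2 i c = 0) ∧
  (∀ i, totalPaid st.2 i ≤ 1 / (Fintype.card V : ℝ)) ∧
  (∀ i, totalPaid st.2 i ≤ ρstar * util u i st.1)

lemma inv_start (u : V → C → ℝ) (ρstar : ℝ) :
    InvP u ρstar ((∅ : Finset C), fun (_ : V) (_ : C) => (0:ℝ)) := by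
  refine ⟨fun i c => le_refl 0, fun i c _ => rfl, fun i => ?_, fun i => ?_⟩ <;>
    simp [totalPaid, util] <;> positivity

lemma totalPaid_update (p : V → C → ℝ) (c : C) (m : V → ℝ) (hp : ∀ i, p i c = 0) (i : V) :
    totalPaid (fun i c' => if c' = c then m i else p i c') i = m i + totalPaid p i := by
  unfold totalPaid
  rw [← Finset.add_sum_erase Finset.univ _ (Finset.mem_univ c),
      ← Finset.add_sum_erase Finset.univ (p i) (Finset.mem_univ c)]
  simp only [if_pos rfl, hp i, zero_add]
  congr 1
  exact Finset.sum_congr rfl fun c' hc' => if_neg (Finset.ne_of_mem_erase hc')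

lemma inv_step (u : V → C → ℝ) (hu : ∀ i c, 0 ≤ u i c)
    (ρstar : ℝ) (st : Finset C × (V → C → ℝ)) (hInv : InvP u ρstar st)
    (c : C) (hc : c ∉ st.1) (ρ : ℝ) (hρ0 : 0 ≤ ρ) (hρle : ρ ≤ ρstar) :
    InvP u ρstar (insert c st.1,
      fun i c' => if c' = c then
        min (1 / (Fintype.card V : ℝ) - totalPaid st.2 i) (u i c * ρ) else st.2 i c') := by
  obtain ⟨h1, h2, h3, h4⟩ := hInv
  have hρstar : 0 ≤ ρstar := le_trans hρ0 hρle
  have hpay0 : ∀ i, st.2 i c = 0 := fun i => h2 i c hc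
  have htp : ∀ i : V, totalPaid (fun i c' => if c' = c then
      min (1 / (Fintype.card V : ℝ) - totalPaid st.2 i) (u i c * ρ) else st.2 i c') i
      = min (1 / (Fintype.card V : ℝ) - totalPaid st.2 i) (u i c * ρ) + totalPaid st.2 i :=
    totalPaid_update st.2 c _ hpay0
  refine ⟨?_, ?_, ?_, ?_⟩
  · intro i c'
    dsimp only
    split
    · exact le_min (by linarith [h3 i]) (mul_nonneg (hu i c) hρ0)
    · exact h1 i c'
  · intro i c' hc'
    rw [Finset.mem_insert, not_or] at hc'
    dsimp only
    rw [if_neg hc'.1]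
    exact h2 i c' hc'.2
  · intro i
    rw [htp i]
    have := min_le_left (1 / (Fintype.card V : ℝ) - totalPaid st.2 i) (u i c * ρ)
    linarith
  · intro i
    rw [htp i]
    have hminle : min (1 / (Fintype.card V : ℝ) - totalPaid st.2 i) (u i c * ρ)
        ≤ u i c * ρstar :=
      le_trans (min_le_right _ _) (mul_le_mul_of_nonneg_left hρle (hu i c))
    have hutil : util u i (insert c st.1) = u i c + util u i st.1 := by
      unfold util; exact Finset.sum_insert hc
    rw [hutil, mul_add]
    have := h4 i
    nlinarith [mul_le_mul_of_nonneg_left hρle (hu i c)]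

lemma ruleX_mono (cost : C → ℚ) (u : V → C → ℝ) {s t : Finset C × (V → C → ℝ)}
    (h : Relation.ReflTransGen (RuleXStep cost u) s t) : s.1 ⊆ t.1 := by
  induction h with
  | refl => exact subset_rfl
  | tail _ hstep ih =>
      obtain ⟨c, hc, ρ, hρ, haff, hmin, ht⟩ := hstep
      rw [ht]
      exact ih.trans (Finset.subset_insert _ _)

lemma walk (cost : C → ℚ) (u : V → C → ℝ) (hu : ∀ i c, 0 ≤ u i c)
    (W : Finset C) (pay : V → C → ℝ)
    (hterm : RuleXTerminal cost u (W, pay)) (ρstar : ℝ) :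
    ∀ st : Finset C × (V → C → ℝ),
      Relation.ReflTransGen (RuleXStep cost u) st (W, pay) → InvP u ρstar st →
      ∃ Wt : Finset C, ∃ pt : V → C → ℝ, Wt ⊆ W ∧ InvP u ρstar (Wt, pt) ∧
        ∀ ρ' : ℝ, 0 ≤ ρ' → ρ' ≤ ρstar → ∀ c ∉ Wt, ¬ affordable cost u pt ρ' c := by
  intro st h
  induction h using Relation.ReflTransGen.head_induction_on with
  | refl =>
      intro hInv
      exact ⟨W, pay, subset_rfl, hInv, fun ρ' h0 _ c hc => hterm ρ' h0 c hc⟩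
  | head hstep hrest ih =>
      intro hInv
      rename_i st' mid
      have hchain' := hrest.head hstep
      obtain ⟨c, hc, ρ, hρ0, haff, hmin, ht⟩ := hstep
      by_cases hle : ρ ≤ ρstar
      · apply ih
        rw [ht]
        exact inv_step u hu ρstar st' hInv c hc ρ hρ0 hle
      · refine ⟨st'.1, st'.2, ruleX_mono cost u hchain', hInv, ?_⟩
        intro ρ' h0 hle' c' hc' haff'
        exact hle (le_trans (hmin ρ' h0 c' hc' haff') hle')

lemma unaffordable_bound (cost : C → ℚ) (u : V → C → ℝ)
    (hcost : ∀ c, 0 < cost c)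
    (pt : V → C → ℝ) (Wt : Finset C) (ρstar : ℝ) (hρstar : 0 ≤ ρstar)
    (hl : ∀ i, 0 ≤ 1 / (Fintype.card V : ℝ) - totalPaid pt i)
    (hnaff : ∀ ρ' : ℝ, 0 ≤ ρ' → ρ' ≤ ρstar → ∀ c ∉ Wt, ¬ affordable cost u pt ρ' c)
    (c : C) (hc : c ∉ Wt) :
    ∑ i, min (1 / (Fintype.card V : ℝ) - totalPaid pt i) (u i c * ρstar) ≤ (cost c : ℝ) := by
  by_contra hgt
  push_neg at hgt
  have hcont : ContinuousOn
      (fun ρ : ℝ => ∑ i, min (1 / (Fintype.card V : ℝ) - totalPaid pt i) (u i c * ρ))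
      (Set.Icc 0 ρstar) := by
    apply Continuous.continuousOn
    apply continuous_finset_sum
    intro i _
    exact continuous_const.min (continuous_const.mul continuous_id)
  have hg0 : (fun ρ : ℝ => ∑ i, min (1 / (Fintype.card V : ℝ) - totalPaid pt i) (u i c * ρ)) 0
      = 0 := by
    simp only [mul_zero]
    exact Finset.sum_eq_zero fun i _ => min_eq_right (hl i)
  have hmem : (cost c : ℝ) ∈ Set.Icc
      ((fun ρ : ℝ => ∑ i, min (1 / (Fintype.card V : ℝ) - totalPaid pt i) (u i c * ρ)) 0)
      ((fun ρ : ℝ => ∑ i, min (1 / (Fintype.card V : ℝ) - totalPaid pt i) (u i c * ρ)) ρstar) := by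
    rw [Set.mem_Icc, hg0]
    constructor
    · exact_mod_cast (hcost c).le
    · exact le_of_lt hgt
  obtain ⟨ρ', hρ'mem, hρ'eq⟩ := intermediate_value_Icc hρstar hcont hmem
  exact hnaff ρ' hρ'mem.1 hρ'mem.2 c hc hρ'eq

lemma key_lemma {ι : Type*} (x : ι → ℝ) (S : Finset ι) (s₀ a umin : ℝ)
    (ha : 1 ≤ a) (huminpos : 0 < umin) (hs₀ : 0 ≤ s₀)
    (hx : ∀ i ∈ S, umin ≤ x i)
    (hC : ∀ z : ℝ, 0 < z → (a - 1) * ∑ i ∈ S.filter (fun i => x i ≤ z), x i ≤ s₀ * z) :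
    ∀ (m : ℕ) (S' : Finset ι), S'.card ≤ m → S' ⊆ S →
      (∀ i ∈ S, ∀ j ∈ S', x i ≤ x j → i ∈ S') →
      ∀ Z : ℝ, umin ≤ Z → (∀ i ∈ S', x i ≤ Z) →
      (a - 1) * ∑ i ∈ S', (1 - x i / Z) ≤ s₀ * Real.log (Z / umin) := by
  classical
  intro m
  induction m with
  | zero =>
      intro S' hcard _ _ Z hZ _
      have hS' : S' = ∅ := Finset.card_eq_zero.mp (Nat.le_zero.mp hcard)
      subst hS'
      simp only [Finset.sum_empty, mul_zero]
      exact mul_nonneg hs₀ (Real.log_nonneg ((one_le_div huminpos).mpr hZ))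
  | succ m ih =>
      intro S' hcard hS'S hDC Z hZ hZ'
      rcases S'.eq_empty_or_nonempty with rfl | hne
      · simp only [Finset.sum_empty, mul_zero]
        exact mul_nonneg hs₀ (Real.log_nonneg ((one_le_div huminpos).mpr hZ))
      obtain ⟨jstar, hjstar, hmax⟩ := S'.exists_max_image x hne
      set M := x jstar with hM
      have hMmin : umin ≤ M := hx jstar (hS'S hjstar)
      have hM0 : 0 < M := lt_of_lt_of_le huminpos hMmin
      have hMZ : M ≤ Z := hZ' jstar hjstar
      have hZ0 : 0 < Z := lt_of_lt_of_le huminpos hZ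
      set S'' := S'.filter (fun i => x i < M) with hS''
      have hsub : S'' ⊆ S' := Finset.filter_subset _ _
      have hjs : jstar ∉ S'' := by
        rw [hS'', Finset.mem_filter]
        rintro ⟨-, h⟩
        exact lt_irrefl _ h
      have hcard'' : S''.card ≤ m := by
        have hsube : S'' ⊆ S'.erase jstar := fun i hi =>
          Finset.mem_erase.mpr ⟨by rintro rfl; exact hjs hi, hsub hi⟩
        have h1 : S''.card ≤ (S'.erase jstar).card := Finset.card_le_card hsube
        have h2 : (S'.erase jstar).card = S'.card - 1 := Finset.card_erase_of_mem hjstar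
        have h3 : 1 ≤ S'.card := Finset.card_pos.mpr hne
        omega
      have hDC'' : ∀ i ∈ S, ∀ j ∈ S'', x i ≤ x j → i ∈ S'' := by
        intro i hi j hj hij
        have hj' := Finset.mem_filter.mp hj
        exact Finset.mem_filter.mpr ⟨hDC i hi j hj'.1 hij, lt_of_le_of_lt hij hj'.2⟩
      have hIH := ih S'' hcard'' (hsub.trans hS'S) hDC'' M hMmin
        (fun i hi => le_of_lt (Finset.mem_filter.mp hi).2)
      have hfil : S' ⊆ S.filter (fun i => x i ≤ M) :=
        fun i hi => Finset.mem_filter.mpr ⟨hS'S hi, hmax i hi⟩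
      have hxnn : ∀ i ∈ S, (0:ℝ) ≤ x i := fun i hi => le_trans huminpos.le (hx i hi)
      have hsumle : ∑ i ∈ S', x i ≤ ∑ i ∈ S.filter (fun i => x i ≤ M), x i :=
        Finset.sum_le_sum_of_subset_of_nonneg hfil
          (fun i hi _ => hxnn i (Finset.mem_filter.mp hi).1)
      have ha' : (0:ℝ) ≤ a - 1 := by linarith
      have hCS' : (a - 1) * ∑ i ∈ S', x i ≤ s₀ * M :=
        le_trans (mul_le_mul_of_nonneg_left hsumle ha') (hC M hM0)
      have hMne : M ≠ 0 := ne_of_gt hM0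
      have hZne : Z ≠ 0 := ne_of_gt hZ0
      have hsplit : ∑ i ∈ S', (1 - x i / Z)
          = ∑ i ∈ S'', (1 - x i / M) + (1 / M - 1 / Z) * ∑ i ∈ S', x i := by
        have e1 : ∀ i ∈ S', (1 - x i / Z) = (1 - x i / M) + (1 / M - 1 / Z) * x i := by
          intro i _
          field_simp
          ring
        rw [Finset.sum_congr rfl e1, Finset.sum_add_distrib, ← Finset.mul_sum]
        congr 1
        rw [← Finset.sum_filter_add_sum_filter_not S' (fun i => x i < M) (fun i => 1 - x i / M)]
        have hzero : ∑ i ∈ S'.filter (fun i => ¬ x i < M), (1 - x i / M) = 0 := by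
          refine Finset.sum_eq_zero fun i hi => ?_
          have h' := Finset.mem_filter.mp hi
          have hxi : x i = M := le_antisymm (hmax i h'.1) (not_lt.mp h'.2)
          rw [hxi, div_self hMne]
          ring
        rw [hzero, add_zero]
      have hinv : (0:ℝ) ≤ 1 / M - 1 / Z := by
        have := one_div_le_one_div_of_le hM0 hMZ
        linarith
      have hlog1 : 1 - M / Z ≤ Real.log (Z / M) := by
        have h1 : Real.log (M / Z) ≤ M / Z - 1 :=
          Real.log_le_sub_one_of_pos (div_pos hM0 hZ0)
        have h2 : Real.log (Z / M) = - Real.log (M / Z) := by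
          rw [← Real.log_inv, inv_div]
        linarith
      have hlogadd : Real.log (M / umin) + Real.log (Z / M) = Real.log (Z / umin) := by
        rw [Real.log_div hMne (ne_of_gt huminpos), Real.log_div hZne hMne,
            Real.log_div hZne (ne_of_gt huminpos)]
        ring
      calc (a - 1) * ∑ i ∈ S', (1 - x i / Z)
          = (a - 1) * ∑ i ∈ S'', (1 - x i / M)
            + (1 / M - 1 / Z) * ((a - 1) * ∑ i ∈ S', x i) := by rw [hsplit]; ring
        _ ≤ s₀ * Real.log (M / umin) + (1 / M - 1 / Z) * (s₀ * M) :=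
            add_le_add hIH (mul_le_mul_of_nonneg_left hCS' hinv)
        _ = s₀ * (Real.log (M / umin) + (1 - M / Z)) := by
            field_simp
        _ ≤ s₀ * (Real.log (M / umin) + Real.log (Z / M)) :=
            mul_le_mul_of_nonneg_left (by linarith) hs₀
        _ = s₀ * Real.log (Z / umin) := by rw [hlogadd]

end RuleXProof


/-- Every Rule X outcome is in the α-core for
α = 4·ln(2·u_max/u_min), where u_max is the largest utility a voter gets from a
feasible outcome and u_min the smallest positive utility that a voter gets from
any set of candidates. -/
theorem ruleX_alpha_core
    {V C : Type*} [Fintype V] [DecidableEq V] [Fintype C] [DecidableEq C] [Nonempty V]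
    (cost : C → ℚ) (u : V → C → ℝ) (hvalid : validPB cost u)
    (W : Finset C) (hW : RuleXOutcome cost u W)
    (umax umin : ℝ)
    (humax : umax = sSup {x : ℝ | ∃ (i : V) (W' : Finset C), feasible cost W' ∧ util u i W' = x})
    (humin : umin = sInf {x : ℝ | ∃ (i : V) (W' : Finset C), util u i W' = x ∧ 0 < x}) :
    inAlphaCore cost u (4 * Real.log (2 * umax / umin)) W := by
  classical
  obtain ⟨hcostpos, huBounds, hupos⟩ := hvalid
  have hu0 : ∀ i c, 0 ≤ u i c := fun i c => (huBounds i c).1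
  obtain ⟨pay, hchain, hterm⟩ := hW
  intro S T hTne hcostT
  by_contra hcon
  push_neg at hcon
  set a := 4 * Real.log (2 * umax / umin) with hadef
  clear_value a
  have hn0 : (0:ℝ) < (Fintype.card V : ℝ) := by exact_mod_cast Fintype.card_pos
  have hcostTpos : 0 < costOf cost T := by
    obtain ⟨c0, hc0⟩ := hTne
    refine Finset.sum_pos (fun c _ => ?_) ⟨c0, hc0⟩
    exact_mod_cast hcostpos c
  have hSpos : 0 < (S.card : ℝ) := by
    have h := lt_of_lt_of_le hcostTpos hcostT
    rcases div_pos_iff.mp h with ⟨h1, -⟩ | ⟨-, h2⟩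
    · exact h1
    · linarith
  have hSne : S.Nonempty := Finset.card_pos.mp (by exact_mod_cast hSpos)
  have hsn : (S.card : ℝ) ≤ (Fintype.card V : ℝ) := by
    exact_mod_cast Finset.card_le_univ S
  have hTfeas : feasible cost T :=
    le_trans hcostT ((div_le_one hn0).mpr hsn)
  -- each i ∈ S has positive utility for T, and a > 0
  have hx_and_a : ∀ i ∈ S, 0 < util u i T ∧ 0 < a := by
    intro i hi
    obtain ⟨c0, hc0⟩ := hTne
    have h1 := hcon i hi c0 hc0
    have h2 : 0 ≤ util u i (insert c0 W) := util_nonneg u hu0 _ _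
    have h3 : 0 < util u i T / a := lt_of_le_of_lt h2 h1
    rcases div_pos_iff.mp h3 with ⟨hxp, hap⟩ | ⟨hxn, _⟩
    · exact ⟨hxp, hap⟩
    · exact absurd hxn (not_lt.mpr (util_nonneg u hu0 i T))
  have hxpos : ∀ i ∈ S, 0 < util u i T := fun i hi => (hx_and_a i hi).1
  obtain ⟨i₀, hi₀⟩ := hSne
  have ha_pos : 0 < a := (hx_and_a i₀ hi₀).2
  -- umax / umin facts
  have hAfin : {x : ℝ | ∃ (i : V) (W' : Finset C), feasible cost W' ∧ util u i W' = x}.Finite := by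
    apply Set.Finite.subset (Set.finite_range (fun p : V × Finset C => util u p.1 p.2))
    rintro x ⟨i, W', -, rfl⟩
    exact ⟨(i, W'), rfl⟩
  have hBfin : {x : ℝ | ∃ (i : V) (W' : Finset C), util u i W' = x ∧ 0 < x}.Finite := by
    apply Set.Finite.subset (Set.finite_range (fun p : V × Finset C => util u p.1 p.2))
    rintro x ⟨i, W', rfl, -⟩
    exact ⟨(i, W'), rfl⟩
  have hxmax : ∀ i ∈ S, util u i T ≤ umax := by
    intro i hi
    rw [humax]
    exact le_csSup hAfin.bddAbove ⟨i, T, hTfeas, rfl⟩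
  have humin_le : ∀ i ∈ S, umin ≤ util u i T := by
    intro i hi
    rw [humin]
    exact csInf_le hBfin.bddBelow ⟨i, T, rfl, hxpos i hi⟩
  have hBne : {x : ℝ | ∃ (i : V) (W' : Finset C), util u i W' = x ∧ 0 < x}.Nonempty :=
    ⟨util u i₀ T, i₀, T, rfl, hxpos i₀ hi₀⟩
  have humin_pos : 0 < umin := by
    rw [humin]
    obtain ⟨i, W', -, hp⟩ := hBne.csInf_mem hBfin
    exact hp
  have humax_ge : umin ≤ umax := le_trans (humin_le i₀ hi₀) (hxmax i₀ hi₀)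
  have humax_pos : 0 < umax := lt_of_lt_of_le humin_pos humax_ge
  have ha2 : 2 < a := by
    have h1 : (2:ℝ) ≤ 2 * umax / umin := by
      rw [mul_div_assoc]
      have : (1:ℝ) ≤ umax / umin := (one_le_div humin_pos).mpr humax_ge
      linarith
    have h2 : Real.log 2 ≤ Real.log (2 * umax / umin) :=
      Real.log_le_log two_pos h1
    have h3 : (0.6931471803:ℝ) < Real.log 2 := Real.log_two_gt_d9
    rw [hadef]
    linarith
  -- the main constraint, for every threshold z
  have constraint : ∀ z : ℝ, 0 < z →
      (a - 1) * ∑ i ∈ S.filter (fun i => util u i T ≤ z), util u i T ≤ (S.card:ℝ) * z := by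
    intro z hz
    set ρstar := a / ((Fintype.card V : ℝ) * z) with hρdef
    clear_value ρstar
    have hρpos : 0 < ρstar := by
      rw [hρdef]; exact div_pos ha_pos (mul_pos hn0 hz)
    obtain ⟨Wt, pt, hWtW, hInvt, hnaff⟩ :=
      walk cost u hu0 W pay hterm ρstar (∅, fun _ _ => 0) hchain (inv_start u ρstar)
    obtain ⟨hp1, hp2, hp3, hp4⟩ := hInvt
    have hl : ∀ i, 0 ≤ 1/(Fintype.card V:ℝ) - totalPaid pt i := fun i => by linarith [hp3 i]
    have hub : ∀ c ∉ Wt,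
        ∑ i, min (1 / (Fintype.card V : ℝ) - totalPaid pt i) (u i c * ρstar) ≤ (cost c : ℝ) :=
      fun c hcnot => unaffordable_bound cost u hcostpos pt Wt ρstar hρpos.le hl hnaff c hcnot
    set Sz := S.filter (fun i => util u i T ≤ z) with hSzdef
    have hmin_eq : ∀ i ∈ Sz, ∀ c ∈ T \ W,
        min (1/(Fintype.card V:ℝ) - totalPaid pt i) (u i c * ρstar) = u i c * ρstar := by
      intro i hi c hcmem
      obtain ⟨hiS, hiz⟩ := Finset.mem_filter.mp hi
      obtain ⟨hcT, hcW⟩ := Finset.mem_sdiff.mp hcmem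
      have hins : util u i (insert c W) = u i c + util u i W := by
        unfold util; exact Finset.sum_insert hcW
      have hH : u i c + util u i W < util u i T / a := by
        have := hcon i hiS c hcT
        rwa [hins] at this
      have hWtle : util u i Wt ≤ util u i W := util_mono u hu0 i hWtW
      have htp := hp4 i
      have hxz : util u i T * ρstar / a ≤ 1/(Fintype.card V:ℝ) := by
        have e : util u i T * ρstar / a = util u i T / ((Fintype.card V:ℝ)*z) := by
          rw [hρdef]
          have ha0 : a ≠ 0 := ne_of_gt ha_pos
          field_simp
        rw [e, div_le_div_iff₀ (mul_pos hn0 hz) hn0]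
        nlinarith [hn0, hiz]
      apply min_eq_right
      have hmul1 : u i c * ρstar ≤ (util u i T / a - util u i W) * ρstar :=
        mul_le_mul_of_nonneg_right (by linarith) hρpos.le
      have hmul2 : ρstar * util u i Wt ≤ ρstar * util u i W :=
        mul_le_mul_of_nonneg_left hWtle hρpos.le
      have hexp : (util u i T / a - util u i W) * ρstar
          = util u i T * ρstar / a - util u i W * ρstar := by ring
      rw [hexp] at hmul1
      nlinarith [htp]
    have hminnn : ∀ (i : V) (c : C),
        0 ≤ min (1/(Fintype.card V:ℝ) - totalPaid pt i) (u i c * ρstar) :=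
      fun i c => le_min (hl i) (mul_nonneg (hu0 i c) hρpos.le)
    have hWtW' : ∀ c ∈ T \ W, c ∉ Wt := by
      intro c hcmem hmem
      exact (Finset.mem_sdiff.mp hcmem).2 (hWtW hmem)
    have hsum1 : ∑ i ∈ Sz, ρstar * util u i (T \ W) ≤ costOf cost (T \ W) := by
      have e1 : ∑ i ∈ Sz, ρstar * util u i (T \ W)
          = ∑ c ∈ T \ W, ∑ i ∈ Sz,
              min (1/(Fintype.card V:ℝ) - totalPaid pt i) (u i c * ρstar) := by
        rw [Finset.sum_comm]
        refine Finset.sum_congr rfl fun i hi => ?_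
        unfold util
        rw [Finset.mul_sum]
        refine Finset.sum_congr rfl fun c hcmem => ?_
        rw [hmin_eq i hi c hcmem, mul_comm]
      rw [e1]
      unfold costOf
      refine Finset.sum_le_sum fun c hcmem => ?_
      refine le_trans ?_ (hub c (hWtW' c hcmem))
      exact Finset.sum_le_sum_of_subset_of_nonneg (Finset.subset_univ Sz)
        (fun i _ _ => hminnn i c)
    have hcostTW : costOf cost (T \ W) ≤ costOf cost T := by
      unfold costOf
      refine Finset.sum_le_sum_of_subset_of_nonneg (Finset.sdiff_subset) ?_
      intro c _ _
      exact_mod_cast (hcostpos c).le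
    have hTWutil : ∀ i ∈ Sz, (1 - 1/a) * util u i T ≤ util u i (T \ W) := by
      intro i hi
      obtain ⟨hiS, -⟩ := Finset.mem_filter.mp hi
      have hsubTW : T ⊆ (T \ W) ∪ W := by
        intro c hcT
        rw [Finset.mem_union, Finset.mem_sdiff]
        by_cases h : c ∈ W
        · exact Or.inr h
        · exact Or.inl ⟨hcT, h⟩
      have hT1 : util u i T ≤ util u i (T \ W) + util u i W := by
        have h1 : util u i T ≤ util u i ((T \ W) ∪ W) := util_mono u hu0 i hsubTW
        have h2 : util u i ((T \ W) ∪ W) = util u i (T \ W) + util u i W := by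
          unfold util
          exact Finset.sum_union (Finset.sdiff_disjoint)
        linarith [h1, h2.le, h2.ge]
      obtain ⟨c0, hc0⟩ := hTne
      have hWa : util u i W < util u i T / a := by
        have h1 := hcon i hiS c0 hc0
        have h2 : util u i W ≤ util u i (insert c0 W) :=
          util_mono u hu0 i (Finset.subset_insert c0 W)
        linarith
      have he : (1 - 1/a) * util u i T = util u i T - util u i T / a := by
        rw [sub_mul, one_mul, one_div, inv_mul_eq_div]
      rw [he]
      linarith
    have hfinal : ∑ i ∈ Sz, ρstar * ((1 - 1/a) * util u i T)
        ≤ (S.card:ℝ)/(Fintype.card V:ℝ) := by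
      refine le_trans ?_ (le_trans hsum1 (le_trans hcostTW hcostT))
      refine Finset.sum_le_sum fun i hi => ?_
      exact mul_le_mul_of_nonneg_left (hTWutil i hi) hρpos.le
    have hlhs : ∑ i ∈ Sz, ρstar * ((1 - 1/a) * util u i T)
        = ((a - 1) * ∑ i ∈ Sz, util u i T) / ((Fintype.card V:ℝ) * z) := by
      have ha0 : a ≠ 0 := ne_of_gt ha_pos
      have hcoef : ρstar * (1 - 1/a) = (a-1)/((Fintype.card V:ℝ)*z) := by
        rw [hρdef]
        field_simp
      calc ∑ i ∈ Sz, ρstar * ((1 - 1/a) * util u i T)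
          = ∑ i ∈ Sz, (ρstar * (1 - 1/a)) * util u i T := by
            refine Finset.sum_congr rfl fun i _ => by ring
        _ = (ρstar * (1 - 1/a)) * ∑ i ∈ Sz, util u i T := (Finset.mul_sum _ _ _).symm
        _ = ((a-1)/((Fintype.card V:ℝ)*z)) * ∑ i ∈ Sz, util u i T := by rw [hcoef]
        _ = ((a - 1) * ∑ i ∈ Sz, util u i T) / ((Fintype.card V:ℝ) * z) := by
            rw [div_mul_eq_mul_div]
    have hrhs : (S.card:ℝ)/(Fintype.card V:ℝ)
        = ((S.card:ℝ) * z) / ((Fintype.card V:ℝ) * z) := by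
      rw [mul_div_mul_right _ _ (ne_of_gt hz)]
    rw [hlhs, hrhs] at hfinal
    exact (div_le_div_iff_of_pos_right (mul_pos hn0 hz)).mp hfinal
  -- apply the key lemma
  have hKey := key_lemma (fun i => util u i T) S (S.card:ℝ) a umin
    (by linarith) humin_pos hSpos.le humin_le constraint
    S.card S le_rfl subset_rfl (fun i hi _ _ _ => hi) (2*umax)
    (by linarith) (fun i hi => by linarith [hxmax i hi])
  have hhalf : ∀ i ∈ S, (1:ℝ)/2 ≤ 1 - util u i T / (2*umax) := by
    intro i hi
    have h1 := hxmax i hi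
    have h2 : (0:ℝ) < 2*umax := by linarith
    have h3 : util u i T / (2*umax) ≤ 1/2 := by
      rw [div_le_iff₀ h2]
      linarith
    linarith
  have hsumhalf : (S.card:ℝ) * (1/2) ≤ ∑ i ∈ S, (1 - util u i T / (2*umax)) := by
    have := Finset.sum_le_sum hhalf
    rw [Finset.sum_const] at this
    rw [nsmul_eq_mul] at this
    exact this
  have hlow : (a - 1) * ((S.card:ℝ) * (1/2))
      ≤ (a - 1) * ∑ i ∈ S, (1 - util u i T / (2*umax)) :=
    mul_le_mul_of_nonneg_left hsumhalf (by linarith)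
  have hloga : Real.log (2*umax/umin) = a/4 := by rw [hadef]; ring
  rw [hloga] at hKey
  nlinarith [mul_pos hSpos (show (0:ℝ) < a - 2 by linarith)]
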